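/- Let X be an approximate subring of a ring, R := ⟨X⟩ the subring it generates, and let f : R → S be a locally compact model of X, i.e. a ring homomorphism to a locally compact Hausdorff topological ring S such that f[X] has compact closure in S and there exist a neighborhood V of 0 in S and m ∈ ℕ with f⁻¹[V] ⊆ X_m. Then for every neighborhood U of 0 in S, the set f⁻¹[U] is additively generic, i.e. finitely many additive translates of f⁻¹[U] cover X. -/

import Mathlib

open Pointwise

/-- A subset of a (not necessarily unital or commutative) ring is additively symmetric
if it contains `0` and `-X = X`. -/
def AddSymmetric {R : Type*} [NonUnitalRing R] (X : Set R) : Prop :=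
  (0 : R) ∈ X ∧ -X = X

/-- `X` is an approximate subring if it is additively symmetric and
`X·X ∪ (X+X) ⊆ F + X` for some finite subset `F` of the subring generated by `X`. -/
def IsApproxSubring {R : Type*} [NonUnitalRing R] (X : Set R) : Prop :=
  AddSymmetric X ∧ ∃ F : Set R, F.Finite ∧ F ⊆ (NonUnitalSubring.closure X : Set R) ∧
    X * X ∪ (X + X) ⊆ F + X

/-- The sequence `X_0 := X`, `X_{n+1} := X_n·X_n + (X_n + X_n)`. -/
def XSeq {R : Type*} [NonUnitalRing R] (X : Set R) : ℕ → Set R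
  | 0 => X
  | n + 1 => XSeq X n * XSeq X n + (XSeq X n + XSeq X n)

/-- Let `X` be an approximate subring generating the ring `R`, and let `f : R →ₙ+* S`
be a locally compact model of `X`. Then for every neighborhood `U` of `0` in `S`,
the set `f⁻¹[U]` is additively generic: finitely many additive translates of it
cover `X`. -/
theorem locally_compact_ring_model_preimage_generic
    {R S : Type*} [NonUnitalRing R] [NonUnitalRing S] [TopologicalSpace S]
    [IsTopologicalRing S] [LocallyCompactSpace S] [T2Space S]
    (X : Set R) (hX : IsApproxSubring X) (hgen : NonUnitalSubring.closure X = ⊤)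
    (f : R →ₙ+* S) (hcomp : IsCompact (closure (⇑f '' X)))
    (hmodel : ∃ V ∈ nhds (0 : S), ∃ m : ℕ, ⇑f ⁻¹' V ⊆ XSeq X m)
    (U : Set S) (hU : U ∈ nhds (0 : S)) :
    ∃ F : Set R, F.Finite ∧ X ⊆ F + ⇑f ⁻¹' U := by
  -- Find a symmetric neighborhood `V` of `0` with `V - V ⊆ U`.
  obtain ⟨W, hW, hWU⟩ := exists_nhds_zero_half hU
  set V : Set S := W ∩ (-W) with hVdef
  have hV : V ∈ nhds (0 : S) := by
    apply Filter.inter_mem hW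
    simpa using (continuous_neg.continuousAt (x := (0:S))).preimage_mem_nhds
      (by simpa using hW)
  have hVsub : ∀ a b : S, a ∈ V → b ∈ V → a - b ∈ U := by
    intro a b ha hb
    have hb' : -b ∈ W := by
      have := hb.2
      simpa using this
    have := hWU a ha.1 (-b) hb'
    simpa [sub_eq_add_neg] using this
  -- Cover the compact set `K = closure (f '' X)` by translates `z + V`.
  set K := closure (⇑f '' X) with hK
  have hcov : ∀ z ∈ K, (fun w => z + w) '' V ∈ nhds z := by
    intro z hz
    have : Filter.map (fun w => z + w) (nhds (0 : S)) = nhds z := by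
      simpa using map_add_left_nhds_zero (x := z)
    rw [← this]
    exact Filter.image_mem_map hV
  obtain ⟨t, htcov⟩ := hcomp.elim_nhds_subcover' (fun z _ => (fun w => (z:S) + w) '' V) hcov
  -- Pick, for each center `z ∈ t`, a point of `X` mapping into `z + V`.
  have hchoice : ∀ z : K, ∃ x : R, x ∈ X ∧ f x ∈ (fun w => (z : S) + w) '' V := by
    intro z
    have hzK : (z : S) ∈ K := z.2
    have := mem_closure_iff_nhds.1 hzK _ (hcov z hzK)
    obtain ⟨y, hy1, hy2⟩ := this
    obtain ⟨x, hxX, hfx⟩ := hy2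
    exact ⟨x, hxX, hfx ▸ hy1⟩
  choose g hgX hgV using hchoice
  refine ⟨g '' (↑t : Set ↑K), (t.finite_toSet.image g), ?_⟩
  intro x hx
  have hfxK : f x ∈ K := subset_closure ⟨x, hx, rfl⟩
  have := htcov hfxK
  simp only [Set.mem_iUnion] at this
  obtain ⟨z, hzt, hfz⟩ := this
  obtain ⟨a, haV, ha⟩ := hfz
  obtain ⟨b, hbV, hb⟩ := hgV z
  refine ⟨g z, ⟨z, hzt, rfl⟩, x - g z, ?_, by show g z + (x - g z) = x; rw [add_comm, sub_add_cancel]⟩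
  show f (x - g z) ∈ U
  have : f x - f (g z) = a - b := by
    rw [← ha, ← hb]; exact add_sub_add_left_eq_sub a b _
  rw [map_sub, this]
  exact hVsub a b haV hbV
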